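/- Let φ : R_A → R_B be a graded ring isomorphism that is k-stable, and let ℓ := ht(φ(x_{k+1})) (necessarily ℓ ≥ k+1). Then there exist a nonzero rational number ε and an element w ∈ F_k(B) ⊗ ℚ such that φ(x_{k+1}) = ε(2y_ℓ − β̄_ℓ) + w in H²(B) ⊗ ℚ, where β̄_ℓ := Σ_{j=k+1}^{ℓ−1} b_{ℓ j} y_j denotes β_ℓ with its terms in F_k(B) removed. -/

import Mathlib

open MvPolynomial

namespace Bott

/-- A square integer matrix indexed by `Fin n` (rows, columns).  We think of it as the
matrix `A = (a_{ij})` defining a Bott tower; strict lower triangularity is the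
predicate `SLT` below. -/
abbrev Mat (n : ℕ) := Fin n → Fin n → ℤ

/-- `a` is strictly lower triangular: `a i j = 0` unless `j < i`. -/
def SLT {n : ℕ} (a : Mat n) : Prop := ∀ i j : Fin n, a i j ≠ 0 → (j : ℕ) < (i : ℕ)

section Defs

variable (n : ℕ)

/-- The linear form `α_i = ∑_{j<i} a_{ij} x_j` (the terms with `j ≥ i` vanish for a
strictly lower triangular matrix). -/
noncomputable def alpha (a : Mat n) (i : Fin n) : MvPolynomial (Fin n) ℤ :=
  ∑ j, C (a i j) * X j

/-- The ideal `(x_i² − α_i x_i : 1 ≤ i ≤ n)`. -/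
noncomputable def bottIdeal (a : Mat n) : Ideal (MvPolynomial (Fin n) ℤ) :=
  Ideal.span (Set.range fun i : Fin n => X i ^ 2 - alpha n a i * X i)

/-- The Bott ring `R_A = ℤ[x_1,…,x_n]/(x_i² − α_i x_i)`. -/
abbrev BRing (a : Mat n) := MvPolynomial (Fin n) ℤ ⧸ bottIdeal n a

/-- Quotient projection onto the Bott ring. -/
noncomputable def bmk (a : Mat n) : MvPolynomial (Fin n) ℤ →+* BRing n a :=
  Ideal.Quotient.mk _

/-- The class `x_i` in the Bott ring (0-based: `bx a i` is the paper's `x_{i+1}`). -/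
noncomputable def bx (a : Mat n) (i : Fin n) : BRing n a := bmk n a (X i)

/-- The class of `α_i` in the Bott ring. -/
noncomputable def bal (a : Mat n) (i : Fin n) : BRing n a := bmk n a (alpha n a i)

/-- `F_k(A)`: the span of the first `k` degree-2 generators (paper's `x_1, …, x_k`,
0-based indices `< k`). -/
noncomputable def F (a : Mat n) (k : ℕ) : Submodule ℤ (BRing n a) :=
  Submodule.span ℤ (bx n a '' {i : Fin n | (i : ℕ) < k})

/-- `H²(A)`: the span of all the degree-2 generators. -/
noncomputable def H2 (a : Mat n) : Submodule ℤ (BRing n a) :=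
  Submodule.span ℤ (Set.range (bx n a))

/-- `ht(η) = min {k | η ∈ F_k(A)}`. -/
noncomputable def ht (a : Mat n) (η : BRing n a) : ℕ := sInf {k | η ∈ F n a k}

/-- A ring isomorphism between Bott rings is graded iff it preserves the degree-2
components in both directions (both rings are generated in degree 2, so this is
equivalent to preserving the whole grading). -/
def IsGraded (a b : Mat n) (φ : BRing n a ≃+* BRing n b) : Prop :=
  (∀ z ∈ H2 n a, φ z ∈ H2 n b) ∧ (∀ z ∈ H2 n b, φ.symm z ∈ H2 n a)

/-- `φ` is `k`-stable: `φ(F_k(A)) ⊆ F_k(B)`. -/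
def IsStable (a b : Mat n) (k : ℕ) (φ : BRing n a ≃+* BRing n b) : Prop :=
  ∀ z ∈ F n a k, φ z ∈ F n b k

/-! ### Rationalizations -/

/-- The linear form `α_i` with rational coefficients. -/
noncomputable def alphaQ (a : Mat n) (i : Fin n) : MvPolynomial (Fin n) ℚ :=
  ∑ j, C ((a i j : ℚ)) * X j

noncomputable def bottIdealQ (a : Mat n) : Ideal (MvPolynomial (Fin n) ℚ) :=
  Ideal.span (Set.range fun i : Fin n => X i ^ 2 - alphaQ n a i * X i)

/-- The rationalized Bott ring `R_A ⊗ ℚ`. -/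
abbrev BRingQ (a : Mat n) := MvPolynomial (Fin n) ℚ ⧸ bottIdealQ n a

noncomputable def bmkQ (a : Mat n) : MvPolynomial (Fin n) ℚ →+* BRingQ n a :=
  Ideal.Quotient.mk _

noncomputable def bxQ (a : Mat n) (i : Fin n) : BRingQ n a := bmkQ n a (X i)

noncomputable def balQ (a : Mat n) (i : Fin n) : BRingQ n a := bmkQ n a (alphaQ n a i)

/-- `F_k(A) ⊗ ℚ` inside `R_A ⊗ ℚ`. -/
noncomputable def FQ (a : Mat n) (k : ℕ) : Submodule ℚ (BRingQ n a) :=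
  Submodule.span ℚ (bxQ n a '' {i : Fin n | (i : ℕ) < k})

/-- The canonical map `R_A → R_A ⊗ ℚ`. -/
noncomputable def toQ (a : Mat n) : BRing n a →+* BRingQ n a :=
  Ideal.Quotient.lift (bottIdeal n a)
    ((bmkQ n a).comp (MvPolynomial.map (Int.castRingHom ℚ)))
    (by
      intro p hp
      have hmap : ∀ i : Fin n,
          MvPolynomial.map (Int.castRingHom ℚ) (alpha n a i) = alphaQ n a i := by
        intro i
        simp [alpha, alphaQ, map_sum]
      have h : bottIdeal n a ≤
          Ideal.comap (MvPolynomial.map (Int.castRingHom ℚ)) (bottIdealQ n a) := by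
        rw [bottIdeal, Ideal.span_le]
        rintro _ ⟨i, rfl⟩
        simp only [SetLike.mem_coe, Ideal.mem_comap, map_sub, map_mul, map_pow,
          MvPolynomial.map_X, hmap]
        exact Ideal.subset_span ⟨i, rfl⟩
      rw [RingHom.comp_apply]
      exact Ideal.Quotient.eq_zero_iff_mem.mpr (h hp))

/-- The truncated linear form `β̄_ℓ` (rational version): for a 0-based row index `li`,
this is `∑_{k ≤ j < li} b_{li,j} y_j`, i.e. the paper's `β_ℓ` with its terms in
`F_k(B)` removed. -/
noncomputable def bbarQ (b : Mat n) (k : ℕ) (li : Fin n) : BRingQ n b :=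
  ∑ j ∈ Finset.univ.filter (fun j : Fin n => k ≤ (j : ℕ) ∧ j < li),
    (b li j : ℚ) • bxQ n b j

/-- Half of the truncated linear form `β̄_ℓ / 2` (meaningful when all relevant entries
are even), as an element of the integral Bott ring. -/
noncomputable def bbarHalf (b : Mat n) (k : ℕ) (li : Fin n) : BRing n b :=
  ∑ j ∈ Finset.univ.filter (fun j : Fin n => k ≤ (j : ℕ) ∧ j < li),
    (b li j / 2) • bx n b j

/-! ### Switching and twisting -/

/-- The matrix obtained from `b` by exchanging the rows and columns `p` and `q`. -/
def swapMat (b : Mat n) (p q : Fin n) : Mat n :=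
  fun i j => b (Equiv.swap p q i) (Equiv.swap p q j)

/-- `g : R_C → R_{C'}` is a switching isomorphism: for some `j` (0-based `J`) with
`c_{j+1,j} = 0`, `C'` is obtained from `C` by exchanging the `j`-th and `(j+1)`-st rows
and columns, and `g` swaps the `j`-th and `(j+1)`-st generators and fixes the others. -/
def IsSwitch (c c' : Mat n) (g : BRing n c ≃+* BRing n c') : Prop :=
  IsGraded n c c' g ∧
  ∃ (J : ℕ) (hJ : J + 1 < n),
    c ⟨J + 1, hJ⟩ ⟨J, by omega⟩ = 0 ∧
    c' = swapMat n c ⟨J, by omega⟩ ⟨J + 1, hJ⟩ ∧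
    ∀ i, g (bx n c i) = bx n c' (Equiv.swap (⟨J, by omega⟩ : Fin n) ⟨J + 1, hJ⟩ i)

/-- `g : R_C → R_{C'}` is a twisting isomorphism: for some `j` (0-based `J`) and
`v ∈ F_{j−1}(C)` with `v(γ_j − v) = 0`, the rows of `C'` before `j` agree with those of
`C`, `γ'_j = γ_j − 2v`, and `g` is a graded isomorphism fixing the first `j−1`
generators. -/
def IsTwist (c c' : Mat n) (g : BRing n c ≃+* BRing n c') : Prop :=
  IsGraded n c c' g ∧
  ∃ (J : ℕ) (hJ : J < n) (v : BRing n c),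
    v ∈ F n c J ∧ v * (bal n c ⟨J, hJ⟩ - v) = 0 ∧
    (∀ i : Fin n, (i : ℕ) < J → ∀ m, c' i m = c i m) ∧
    ((∑ m, c' ⟨J, hJ⟩ m • bx n c m) = bal n c ⟨J, hJ⟩ - 2 • v) ∧
    (∀ i : Fin n, (i : ℕ) < J → g (bx n c i) = bx n c' i)

/-- `IsMoveComp n c c' g` : `g : R_C → R_{C'}` is a finite (possibly empty) composition
of switching and twisting isomorphisms. -/
inductive IsMoveComp : ∀ c c' : Mat n, (BRing n c ≃+* BRing n c') → Prop
  | refl (c : Mat n) : IsMoveComp c c (RingEquiv.refl _)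
  | switch {c c' c'' : Mat n} {g : BRing n c ≃+* BRing n c'}
      {g' : BRing n c' ≃+* BRing n c''} :
      IsMoveComp c c' g → IsSwitch n c' c'' g' → IsMoveComp c c'' (g.trans g')
  | twist {c c' c'' : Mat n} {g : BRing n c ≃+* BRing n c'}
      {g' : BRing n c' ≃+* BRing n c''} :
      IsMoveComp c c' g → IsTwist n c' c'' g' → IsMoveComp c c'' (g.trans g')

end Defs

/-! ### Block matrices for ℚ-trivial Bott manifolds -/

/-- Starting (0-based) index of the `s`-th block for the partition `lam`. -/
def blockStart (t : ℕ) (lam : Fin t → ℕ) (s : Fin t) : ℕ :=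
  ∑ s' ∈ Finset.univ.filter (fun s' : Fin t => s' < s), lam s'

/-- The block-diagonal matrix with diagonal blocks `H_{λ_1}, …, H_{λ_t}`, where `H_j`
is the `j × j` strictly lower triangular matrix whose first column below the diagonal
consists of `1`s and whose other entries vanish. -/
def blockMat (n t : ℕ) (lam : Fin t → ℕ) : Mat n := fun i j =>
  if ∃ s : Fin t, (j : ℕ) = blockStart t lam s ∧ blockStart t lam s < (i : ℕ) ∧
      (i : ℕ) < blockStart t lam s + lam s then 1 else 0

/-- `H²(ℋ_{λ_s})`: the subgroup of the degree-2 component spanned by the generators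
belonging to the `s`-th block. -/
noncomputable def blockH2 (n t : ℕ) (lam : Fin t → ℕ) (s : Fin t) :
    Submodule ℤ (BRing n (blockMat n t lam)) :=
  Submodule.span ℤ (bx n (blockMat n t lam) ''
    {i : Fin n | blockStart t lam s ≤ (i : ℕ) ∧ (i : ℕ) < blockStart t lam s + lam s})

end Bott

namespace Bott

variable {n : ℕ}

lemma degree_add (u v : Fin n →₀ ℕ) : (u + v).degree = u.degree + v.degree := by
  classical
  simp only [Finsupp.degree_apply]
  rw [show ∀ w : Fin n →₀ ℕ, ∑ i ∈ w.support, w i = w.sum (fun _ m => m) from fun _ => rfl]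
  exact Finsupp.sum_add_index (by simp) (by simp)

lemma alphaQ_homog (b : Mat n) (i : Fin n) : (alphaQ n b i).IsHomogeneous 1 := by
  apply IsHomogeneous.sum
  intro j _
  simpa using (isHomogeneous_X (R := ℚ) j).C_mul ((b i j : ℚ))

lemma gen_homog (b : Mat n) (i : Fin n) :
    (X i ^ 2 - alphaQ n b i * X i : MvPolynomial (Fin n) ℚ).IsHomogeneous 2 := by
  apply IsHomogeneous.sub (isHomogeneous_X_pow i 2)
  simpa using (alphaQ_homog b i).mul (isHomogeneous_X (R := ℚ) i)

lemma coeff_mul_homog {g r : MvPolynomial (Fin n) ℚ} (hg : g.IsHomogeneous 2)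
    {d : Fin n →₀ ℕ} (hd : d.degree < 2) : coeff d (r * g) = 0 := by
  rw [coeff_mul]
  apply Finset.sum_eq_zero
  rintro ⟨u, v⟩ huv
  rw [Finset.HasAntidiagonal.mem_antidiagonal] at huv
  have hv : v.degree ≠ 2 := by
    have := degree_add u v
    rw [huv] at this
    omega
  rw [hg.coeff_eq_zero hv, mul_zero]

lemma coeff_mul_homog2 {g r : MvPolynomial (Fin n) ℚ} (hg : g.IsHomogeneous 2)
    {d : Fin n →₀ ℕ} (hd : d.degree = 2) :
    coeff d (r * g) = constantCoeff r * coeff d g := by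
  classical
  rw [coeff_mul]
  rw [Finset.sum_eq_single (0, d)]
  · simp [constantCoeff_eq]
  · rintro ⟨u, v⟩ huv hne
    rw [Finset.HasAntidiagonal.mem_antidiagonal] at huv
    by_cases hv : v.degree = 2
    · have hu : u.degree = 0 := by
        have := degree_add u v; rw [huv] at this; omega
      rw [Finsupp.degree_eq_zero_iff] at hu
      subst hu
      rw [zero_add] at huv
      subst huv
      simp at hne
    · rw [hg.coeff_eq_zero hv, mul_zero]
  · intro h
    simp [Finset.HasAntidiagonal.mem_antidiagonal] at h

lemma ideal_coeff_lt {b : Mat n} {p : MvPolynomial (Fin n) ℚ} (hp : p ∈ bottIdealQ n b)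
    {d : Fin n →₀ ℕ} (hd : d.degree < 2) : coeff d p = 0 := by
  rw [bottIdealQ, Ideal.mem_span_range_iff_exists_fun] at hp
  obtain ⟨r, rfl⟩ := hp
  rw [coeff_sum]
  exact Finset.sum_eq_zero fun i _ => coeff_mul_homog (gen_homog b i) hd

lemma ideal_homog_rep {b : Mat n} {p : MvPolynomial (Fin n) ℚ} (hp : p ∈ bottIdealQ n b)
    (hph : p.IsHomogeneous 2) :
    ∃ t : Fin n → ℚ, p = ∑ i, C (t i) * (X i ^ 2 - alphaQ n b i * X i) := by
  rw [bottIdealQ, Ideal.mem_span_range_iff_exists_fun] at hp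
  obtain ⟨r, rfl⟩ := hp
  refine ⟨fun i => constantCoeff (r i), ?_⟩
  have hrhs : (∑ i, C (constantCoeff (r i)) * (X i ^ 2 - alphaQ n b i * X i)
      : MvPolynomial (Fin n) ℚ).IsHomogeneous 2 := by
    apply IsHomogeneous.sum
    intro i _
    exact (gen_homog b i).C_mul _
  have hlhs : (∑ i, r i * (X i ^ 2 - alphaQ n b i * X i)
      : MvPolynomial (Fin n) ℚ).IsHomogeneous 2 := hph
  ext d
  by_cases hd : d.degree = 2
  · rw [coeff_sum, coeff_sum]
    apply Finset.sum_congr rfl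
    intro i _
    rw [coeff_mul_homog2 (gen_homog b i) hd, coeff_C_mul]
  · rw [hlhs.coeff_eq_zero hd, hrhs.coeff_eq_zero hd]

variable {n : ℕ}

lemma smul_bmkQ (b : Mat n) (q : ℚ) (p : MvPolynomial (Fin n) ℚ) :
    q • bmkQ n b p = bmkQ n b (C q * p) := by
  have : bmkQ n b (C q * p) = Submodule.Quotient.mk (p := (bottIdealQ n b : Submodule (MvPolynomial (Fin n) ℚ) (MvPolynomial (Fin n) ℚ))) (q • p) := by
    rw [smul_eq_C_mul]; rfl
  rw [this, Submodule.Quotient.mk_smul]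
  rfl

lemma toQ_bx (b : Mat n) (i : Fin n) : toQ n b (bx n b i) = bxQ n b i := by
  simp [toQ, bx, bmk, bxQ, bmkQ]

variable {n : ℕ}

lemma linear_sum_eq (b : Mat n) (c : Fin n → ℚ) :
    ∑ i, c i • bxQ n b i = bmkQ n b (∑ i, C (c i) * X i) := by
  rw [map_sum]
  simp only [bxQ]
  exact Finset.sum_congr rfl fun i _ => smul_bmkQ b (c i) (X i)

lemma coeff_lin (c : Fin n → ℚ) (j : Fin n) :
    coeff (Finsupp.single j 1) (∑ i, C (c i) * X i) = c j := by
  classical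
  rw [coeff_sum]
  rw [Finset.sum_eq_single j]
  · simp
  · intro i _ hij
    simp [coeff_C_mul, coeff_X', Finsupp.single_left_inj, hij]
  · simp

lemma bxQ_indep {b : Mat n} {c : Fin n → ℚ} (h : ∑ i, c i • bxQ n b i = 0) : ∀ j, c j = 0 := by
  intro j
  rw [linear_sum_eq] at h
  have hmem : (∑ i, C (c i) * X i : MvPolynomial (Fin n) ℚ) ∈ bottIdealQ n b :=
    Ideal.Quotient.eq_zero_iff_mem.mp h
  have hd : (Finsupp.single j 1).degree < 2 := by
    rw [Finsupp.degree_apply, Finsupp.support_single_ne_zero _ one_ne_zero, Finset.sum_singleton,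
      Finsupp.single_eq_same]
    omega
  have := ideal_coeff_lt hmem hd
  rwa [coeff_lin] at this

lemma bxQ_li (b : Mat n) : LinearIndependent ℚ (bxQ n b) :=
  Fintype.linearIndependent_iff.mpr fun c h => bxQ_indep h

set_option synthInstance.maxHeartbeats 400000 in
lemma bx_indep {b : Mat n} {c : Fin n → ℤ} (h : ∑ i, c i • bx n b i = 0) : ∀ j, c j = 0 := by
  have h2 : ∑ i, ((c i : ℚ)) • bxQ n b i = 0 := by
    have := congrArg (toQ n b) h
    rw [map_sum, map_zero] at this
    rw [← this]
    refine Finset.sum_congr rfl fun i _ => ?_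
    rw [map_zsmul, toQ_bx, Int.cast_smul_eq_zsmul]
  intro j
  exact_mod_cast bxQ_indep h2 j

/-- Representation of elements of `F`. -/
lemma F_rep {b : Mat n} {m : ℕ} {z : BRing n b} (hz : z ∈ F n b m) :
    ∃ c : Fin n → ℤ, (∀ i : Fin n, m ≤ (i : ℕ) → c i = 0) ∧ z = ∑ i, c i • bx n b i := by
  classical
  rw [F, Finsupp.mem_span_image_iff_linearCombination] at hz
  obtain ⟨l, hl, rfl⟩ := hz
  refine ⟨fun i => l i, fun i hi => ?_, ?_⟩
  · by_contra h
    have := hl (Finsupp.mem_support_iff.mpr h)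
    simp only [Set.mem_setOf_eq] at this
    omega
  · rw [Finsupp.linearCombination_apply, Finsupp.sum_fintype]
    simp

lemma mem_F {b : Mat n} {m : ℕ} {c : Fin n → ℤ} (hc : ∀ i : Fin n, m ≤ (i : ℕ) → c i = 0) :
    ∑ i, c i • bx n b i ∈ F n b m := by
  apply Submodule.sum_mem
  intro i _
  by_cases hi : (i : ℕ) < m
  · exact Submodule.smul_mem _ _ (Submodule.subset_span ⟨i, hi, rfl⟩)
  · rw [hc i (by omega), zero_smul]; exact Submodule.zero_mem _

lemma mem_FQ {b : Mat n} {m : ℕ} {c : Fin n → ℚ} (hc : ∀ i : Fin n, m ≤ (i : ℕ) → c i = 0) :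
    ∑ i, c i • bxQ n b i ∈ FQ n b m := by
  apply Submodule.sum_mem
  intro i _
  by_cases hi : (i : ℕ) < m
  · exact Submodule.smul_mem _ _ (Submodule.subset_span ⟨i, hi, rfl⟩)
  · rw [hc i (by omega), zero_smul]; exact Submodule.zero_mem _

lemma H2_eq_F (b : Mat n) : H2 n b = F n b n := by
  rw [H2, F]
  congr 1
  rw [show {i : Fin n | (i : ℕ) < n} = Set.univ from Set.eq_univ_of_forall fun i => i.isLt]
  rw [Set.image_univ]

variable {n : ℕ}

lemma lin_homog (c : Fin n → ℚ) :
    (∑ i, C (c i) * X i : MvPolynomial (Fin n) ℚ).IsHomogeneous 1 := by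
  apply IsHomogeneous.sum
  intro j _
  simpa using (isHomogeneous_X (R := ℚ) j).C_mul (c j)

lemma sum_ite_one (i : Fin n) (f : Fin n → ℚ) :
    ∑ m, f m * (if m = i then (1:ℚ) else 0) = f i := by
  simp [mul_ite, Finset.sum_ite_eq']

lemma sum_ite_two {i j : Fin n} (hij : i ≠ j) (f : Fin n → ℚ) :
    ∑ m, f m * (if m = i ∨ m = j then (1:ℚ) else 0) = f i + f j := by
  have key : ∀ m, f m * (if m = i ∨ m = j then (1:ℚ) else 0)
      = (if m = i then f m else 0) + (if m = j then f m else 0) := by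
    intro m
    by_cases h2 : m = i
    · have hmj : m ≠ j := fun h => hij (h2 ▸ h)
      simp [h2, hmj, hij]
    · by_cases h3 : m = j
      · simp [h2, h3, Ne.symm hij]
      · simp [h2, h3]
  rw [Finset.sum_congr rfl fun m _ => key m, Finset.sum_add_distrib]
  simp [Finset.sum_ite_eq']

lemma quad_diag {b : Mat n} (hb : SLT b) {c d t : Fin n → ℚ}
    (h : ∀ v : Fin n → ℚ, (∑ i, c i * v i)^2 - (∑ i, d i * v i) * (∑ i, c i * v i)
      = ∑ m, t m * ((v m)^2 - (∑ j, (b m j : ℚ) * v j) * v m)) (i : Fin n) :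
    t i = c i ^ 2 - d i * c i := by
  have hbii : (b i i : ℚ) = 0 := by
    by_cases hbb : b i i = 0
    · simp [hbb]
    · exact absurd (hb _ _ hbb) (by omega)
  have H := h (fun m => if m = i then 1 else 0)
  rw [sum_ite_one i c, sum_ite_one i d] at H
  have hR : ∀ m : Fin n, t m * ((if m = i then (1:ℚ) else 0)^2 -
      (∑ j, (b m j : ℚ) * (if j = i then (1:ℚ) else 0)) * (if m = i then (1:ℚ) else 0))
      = if m = i then t i * (1 - (b i i : ℚ)) else 0 := by
    intro m
    rw [sum_ite_one i (fun j => (b m j : ℚ))]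
    by_cases hm : m = i
    · subst hm; simp
    · simp [hm]
  rw [Finset.sum_congr rfl fun m _ => hR m, Finset.sum_ite_eq'] at H
  simp [hbii] at H
  linarith [H]

lemma quad_off {b : Mat n} (hb : SLT b) {c d t : Fin n → ℚ}
    (h : ∀ v : Fin n → ℚ, (∑ i, c i * v i)^2 - (∑ i, d i * v i) * (∑ i, c i * v i)
      = ∑ m, t m * ((v m)^2 - (∑ j, (b m j : ℚ) * v j) * v m))
    {i j : Fin n} (hij : i ≠ j) :
    2 * c i * c j - d i * c j - d j * c i = -(t i * (b i j : ℚ) + t j * (b j i : ℚ)) := by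
  have hbii : (b i i : ℚ) = 0 := by
    by_cases hbb : b i i = 0
    · simp [hbb]
    · exact absurd (hb _ _ hbb) (by omega)
  have hbjj : (b j j : ℚ) = 0 := by
    by_cases hbb : b j j = 0
    · simp [hbb]
    · exact absurd (hb _ _ hbb) (by omega)
  have H := h (fun m => if m = i ∨ m = j then 1 else 0)
  rw [sum_ite_two hij c, sum_ite_two hij d] at H
  have hR : ∀ m : Fin n, t m * ((if m = i ∨ m = j then (1:ℚ) else 0)^2 -
      (∑ j', (b m j' : ℚ) * (if j' = i ∨ j' = j then (1:ℚ) else 0)) * (if m = i ∨ m = j then (1:ℚ) else 0))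
      = (if m = i then t i * (1 - ((b i i : ℚ) + (b i j : ℚ))) else 0)
        + (if m = j then t j * (1 - ((b j i : ℚ) + (b j j : ℚ))) else 0) := by
    intro m
    rw [sum_ite_two hij (fun j' => (b m j' : ℚ))]
    by_cases h2 : m = i
    · have hmj : m ≠ j := fun hh => hij (h2 ▸ hh)
      subst h2; simp [hmj]
    · by_cases h3 : m = j
      · subst h3; simp [h2]
      · simp [h2, h3]
  rw [Finset.sum_congr rfl fun m _ => hR m, Finset.sum_add_distrib] at H
  simp only [Finset.sum_ite_eq', Finset.mem_univ, if_true] at H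
  have hdi := quad_diag hb h i
  have hdj := quad_diag hb h j
  rw [hbii, hbjj] at H
  linear_combination H + hdi + hdj
variable {n : ℕ}

lemma rat_mul_den (q : ℚ) : q * (q.den : ℚ) = (q.num : ℚ) := by
  have hd : ((q.den : ℚ)) ≠ 0 := by exact_mod_cast q.den_nz
  nth_rewrite 1 [← Rat.num_div_den q]
  exact div_mul_cancel₀ _ hd

set_option synthInstance.maxHeartbeats 400000 in
lemma not_mem_Fk {k : ℕ} (hk : k < n) {a b : Mat n}
    (φ : BRing n a ≃+* BRing n b) (hφ : IsGraded n a b φ)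
    (hst : IsStable n a b k φ) : φ (bx n a ⟨k, hk⟩) ∉ F n b k := by
  classical
  intro hη
  -- coefficient vectors
  have hcoef : ∀ j : Fin (k+1), ∃ u : Fin n → ℤ,
      (∀ i : Fin n, k ≤ (i : ℕ) → u i = 0) ∧
      φ (bx n a ⟨(j : ℕ), by omega⟩) = ∑ i, u i • bx n b i := by
    intro j
    apply F_rep
    rcases Nat.lt_or_ge (j : ℕ) k with hj | hj
    · exact hst _ (Submodule.subset_span ⟨⟨(j : ℕ), by omega⟩, hj, rfl⟩)
    · have hjk : (j : ℕ) = k := by omega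
      have : (⟨(j : ℕ), by omega⟩ : Fin n) = ⟨k, hk⟩ := Fin.ext hjk
      rw [this]
      exact hη
  choose u hu0 hurep using hcoef
  -- dependence over ℚ
  set vq : Fin (k+1) → (Fin k → ℚ) :=
    fun j i => (u j ⟨(i : ℕ), lt_trans i.2 hk⟩ : ℚ) with hvq
  have hcard : ¬ LinearIndependent ℚ vq := by
    intro hli
    have := hli.fintype_card_le_finrank
    rw [Module.finrank_fin_fun, Fintype.card_fin] at this
    omega
  obtain ⟨g, hg, j0, hj0⟩ := Fintype.not_linearIndependent_iff.mp hcard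
  -- clear denominators
  set D : ℤ := ∏ l, ((g l).den : ℤ) with hD
  have hDne : (D : ℚ) ≠ 0 := by
    rw [hD]
    push_cast
    apply Finset.prod_ne_zero_iff.mpr
    intro l _
    exact_mod_cast (g l).den_nz
  have hmex : ∀ j, ∃ mj : ℤ, (mj : ℚ) = g j * (D : ℚ) := by
    intro j
    obtain ⟨e, he⟩ := Finset.dvd_prod_of_mem (fun l => ((g l).den : ℤ)) (Finset.mem_univ j)
    refine ⟨(g j).num * e, ?_⟩
    rw [hD, he]
    push_cast
    rw [← rat_mul_den (g j)]
    ring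
  choose m hm using hmex
  have hm0 : m j0 ≠ 0 := by
    intro h
    apply hj0
    have := hm j0
    rw [h] at this
    push_cast at this
    rcases mul_eq_zero.mp this.symm with h' | h'
    · exact h'
    · exact absurd (by exact_mod_cast h' : (D:ℚ) = 0) hDne
  -- integral relation on coefficients
  have hrel : ∀ i : Fin n, ∑ j, m j * u j i = 0 := by
    intro i
    by_cases hi : (i : ℕ) < k
    · have happ := congrFun hg ⟨(i : ℕ), hi⟩
      simp only [Finset.sum_apply, Pi.smul_apply, smul_eq_mul, Pi.zero_apply] at happ
      have hcast : ((∑ j, m j * u j i : ℤ) : ℚ) = (D : ℚ) * ∑ j, g j * vq j ⟨(i:ℕ), hi⟩ := by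
        push_cast
        rw [Finset.mul_sum]
        refine Finset.sum_congr rfl fun j _ => ?_
        rw [hm j]
        have h2 : vq j ⟨(i : ℕ), hi⟩ = (u j i : ℚ) := by
          simp only [hvq]
        rw [h2]
        ring
      rw [happ] at hcast
      exact_mod_cast hcast.trans (mul_zero _)
    · apply Finset.sum_eq_zero
      intro j _
      rw [hu0 j i (by omega), mul_zero]
  -- φ kills a nonzero element
  have hz : φ (∑ j : Fin (k+1), m j • bx n a ⟨(j : ℕ), by omega⟩) = 0 := by
    rw [map_sum]
    have : ∀ j : Fin (k+1), φ (m j • bx n a ⟨(j : ℕ), by omega⟩)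
        = ∑ i, (m j * u j i) • bx n b i := by
      intro j
      rw [map_zsmul, hurep j, Finset.smul_sum]
      exact Finset.sum_congr rfl fun i _ => (smul_smul _ _ _)
    rw [Finset.sum_congr rfl fun j _ => this j, Finset.sum_comm]
    apply Finset.sum_eq_zero
    intro i _
    rw [← Finset.sum_smul, hrel i, zero_smul]
  have hzz : (∑ j : Fin (k+1), m j • bx n a ⟨(j : ℕ), by omega⟩) = 0 := by
    apply φ.injective
    rw [hz, map_zero]
  -- contradiction with independence
  have hq : ∑ j : Fin (k+1), ((m j : ℚ)) • bxQ n a ⟨(j : ℕ), by omega⟩ = 0 := by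
    have := congrArg (toQ n a) hzz
    rw [map_sum, map_zero] at this
    rw [← this]
    refine Finset.sum_congr rfl fun j _ => ?_
    rw [map_zsmul, toQ_bx, Int.cast_smul_eq_zsmul]
  have hli2 : LinearIndependent ℚ (fun j : Fin (k+1) => bxQ n a ⟨(j : ℕ), by omega⟩) := by
    apply (bxQ_li a).comp
    intro j1 j2 h12
    apply Fin.ext
    simpa using congrArg Fin.val h12
  have := Fintype.linearIndependent_iff.mp hli2 _ hq j0
  exact hm0 (by exact_mod_cast this)


set_option maxHeartbeats 1000000 in
set_option synthInstance.maxHeartbeats 400000 in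
/-- Let `φ : R_A → R_B` be a `k`-stable graded ring isomorphism and
`ℓ := ht(φ(x_{k+1}))`.  Then necessarily `k + 1 ≤ ℓ ≤ n`, and there are a nonzero
rational `ε` and `w ∈ F_k(B) ⊗ ℚ` with
`φ(x_{k+1}) = ε(2 y_ℓ − β̄_ℓ) + w` in `H²(B) ⊗ ℚ`, where
`β̄_ℓ = ∑_{j=k+1}^{ℓ−1} b_{ℓj} y_j`.  (`y_ℓ` has 0-based index `ℓ − 1`.) -/
theorem stmt_9 (n k : ℕ) (hk : k < n) (a b : Mat n) (ha : SLT a) (hb : SLT b)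
    (φ : BRing n a ≃+* BRing n b) (hφ : IsGraded n a b φ)
    (hst : IsStable n a b k φ) :
    ∃ hl1 : k + 1 ≤ ht n b (φ (bx n a ⟨k, hk⟩)),
    ∃ hln : ht n b (φ (bx n a ⟨k, hk⟩)) ≤ n,
    ∃ ε : ℚ, ε ≠ 0 ∧ ∃ w ∈ FQ n b k,
      toQ n b (φ (bx n a ⟨k, hk⟩)) =
        ε • (2 * bxQ n b ⟨ht n b (φ (bx n a ⟨k, hk⟩)) - 1, by omega⟩ -
             bbarQ n b k ⟨ht n b (φ (bx n a ⟨k, hk⟩)) - 1, by omega⟩) + w := by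
  classical
  have hηH2 : φ (bx n a ⟨k, hk⟩) ∈ H2 n b :=
    hφ.1 _ (Submodule.subset_span ⟨⟨k, hk⟩, rfl⟩)
  have hn_mem : n ∈ {m | φ (bx n a ⟨k, hk⟩) ∈ F n b m} := by
    have : φ (bx n a ⟨k, hk⟩) ∈ F n b n := by rw [← H2_eq_F]; exact hηH2
    exact this
  have hnotk : φ (bx n a ⟨k, hk⟩) ∉ F n b k := not_mem_Fk hk φ hφ hst
  have hl_mem : φ (bx n a ⟨k, hk⟩) ∈ F n b (ht n b (φ (bx n a ⟨k, hk⟩))) :=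
    Nat.sInf_mem ⟨n, hn_mem⟩
  have hl1 : k + 1 ≤ ht n b (φ (bx n a ⟨k, hk⟩)) := by
    by_contra hcon
    push_neg at hcon
    apply hnotk
    have hmono : F n b (ht n b (φ (bx n a ⟨k, hk⟩))) ≤ F n b k := by
      apply Submodule.span_mono
      apply Set.image_mono
      intro i hi
      simp only [Set.mem_setOf_eq] at *
      omega
    exact hmono hl_mem
  have hln : ht n b (φ (bx n a ⟨k, hk⟩)) ≤ n := Nat.sInf_le hn_mem
  set ℓ := ht n b (φ (bx n a ⟨k, hk⟩)) with hldef
  set L : Fin n := ⟨ℓ - 1, by omega⟩ with hLdef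
  have hLval : (L : ℕ) = ℓ - 1 := rfl
  obtain ⟨c, hc0, hcrep⟩ := F_rep hl_mem
  have hcL : c L ≠ 0 := by
    intro hzero
    have hmem1 : φ (bx n a ⟨k, hk⟩) ∈ F n b (ℓ - 1) := by
      rw [hcrep]
      apply mem_F
      intro i hi
      by_cases h2 : (i : ℕ) = ℓ - 1
      · rw [show i = L from Fin.ext (h2.trans hLval.symm)]
        exact hzero
      · exact hc0 i (by omega)
    have hlt : ℓ - 1 < sInf {m | φ (bx n a ⟨k, hk⟩) ∈ F n b m} := by
      have heq : sInf {m | φ (bx n a ⟨k, hk⟩) ∈ F n b m} = ℓ := rfl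
      omega
    exact Nat.notMem_of_lt_sInf hlt hmem1
  -- `bal` lies in `F_k(A)`
  have hbal_eq : bal n a ⟨k, hk⟩ = ∑ j, (a ⟨k, hk⟩ j) • bx n a j := by
    rw [bal, alpha, map_sum]
    refine Finset.sum_congr rfl fun j _ => ?_
    rw [map_mul, zsmul_eq_mul,
      show (C (a ⟨k, hk⟩ j) : MvPolynomial (Fin n) ℤ) = ((a ⟨k, hk⟩ j : ℤ) : MvPolynomial (Fin n) ℤ)
        from eq_intCast (C : ℤ →+* MvPolynomial (Fin n) ℤ) _,
      map_intCast]
    rfl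
  have hbalF : bal n a ⟨k, hk⟩ ∈ F n a k := by
    rw [hbal_eq]
    apply mem_F
    intro j hj
    by_contra hnz
    exact absurd (ha _ _ hnz) (show ¬ (j : ℕ) < k by omega)
  obtain ⟨d, hd0, hdrep⟩ := F_rep (hst _ hbalF)
  -- the quadratic relation
  have hrel : φ (bx n a ⟨k, hk⟩) ^ 2 = φ (bal n a ⟨k, hk⟩) * φ (bx n a ⟨k, hk⟩) := by
    rw [← map_pow, ← map_mul]
    congr 1
    have h0 : bmk n a (X ⟨k, hk⟩ ^ 2 - alpha n a ⟨k, hk⟩ * X ⟨k, hk⟩) = 0 :=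
      Ideal.Quotient.eq_zero_iff_mem.mpr (Ideal.subset_span ⟨⟨k, hk⟩, rfl⟩)
    rw [map_sub, map_mul, map_pow, sub_eq_zero] at h0
    exact h0
  -- pass to ℚ
  have htoQc : toQ n b (φ (bx n a ⟨k, hk⟩)) = bmkQ n b (∑ i, C ((c i : ℚ)) * X i) := by
    rw [hcrep, ← linear_sum_eq, map_sum]
    refine Finset.sum_congr rfl fun i _ => ?_
    rw [map_zsmul, toQ_bx, Int.cast_smul_eq_zsmul]
  have htoQd : toQ n b (φ (bal n a ⟨k, hk⟩)) = bmkQ n b (∑ i, C ((d i : ℚ)) * X i) := by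
    rw [hdrep, ← linear_sum_eq, map_sum]
    refine Finset.sum_congr rfl fun i _ => ?_
    rw [map_zsmul, toQ_bx, Int.cast_smul_eq_zsmul]
  have hQ0 : bmkQ n b ((∑ i, C ((c i : ℚ)) * X i) * (∑ i, C ((c i : ℚ)) * X i)
      - (∑ i, C ((d i : ℚ)) * X i) * (∑ i, C ((c i : ℚ)) * X i)) = 0 := by
    rw [map_sub, map_mul, map_mul, ← htoQc, ← htoQd]
    have hh := congrArg (toQ n b) hrel
    rw [map_pow, map_mul] at hh
    rw [sub_eq_zero, ← hh]
    ring
  have hmemI := Ideal.Quotient.eq_zero_iff_mem.mp hQ0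
  have hhom : ((∑ i, C ((c i : ℚ)) * X i) * (∑ i, C ((c i : ℚ)) * X i)
      - (∑ i, C ((d i : ℚ)) * X i) * (∑ i, C ((c i : ℚ)) * X i)).IsHomogeneous 2 := by
    apply IsHomogeneous.sub
    · simpa using (lin_homog fun i => (c i : ℚ)).mul (lin_homog fun i => (c i : ℚ))
    · simpa using (lin_homog fun i => (d i : ℚ)).mul (lin_homog fun i => (c i : ℚ))
  obtain ⟨t, ht2⟩ := ideal_homog_rep hmemI hhom
  have heval : ∀ v : Fin n → ℚ,
      (∑ i, (c i : ℚ) * v i) ^ 2 - (∑ i, (d i : ℚ) * v i) * (∑ i, (c i : ℚ) * v i)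
      = ∑ m, t m * ((v m) ^ 2 - (∑ j, (b m j : ℚ) * v j) * v m) := by
    intro v
    have h' := congrArg (eval v) ht2
    simp only [map_sub, map_mul, map_sum, map_pow, eval_C, eval_X, alphaQ] at h'
    linear_combination h'
  -- coefficient identities
  have hcLq : ((c L : ℚ)) ≠ 0 := by exact_mod_cast hcL
  have hdL : (d L : ℚ) = 0 := by
    rw [hd0 L (by rw [hLval]; omega)]; simp
  have htL : t L = (c L : ℚ) ^ 2 := by
    rw [quad_diag hb heval L, hdL]; ring
  have hkey : ∀ j : Fin n, k ≤ (j : ℕ) → (j : ℕ) < ℓ - 1 →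
      (c j : ℚ) = -((c L : ℚ) / 2) * (b L j : ℚ) := by
    intro j hj1 hj2
    have hneq : j ≠ L := fun h => absurd hj2 (by rw [h, hLval] at hj2 ⊢; omega)
    have hoff := quad_off hb heval hneq
    have hdj : (d j : ℚ) = 0 := by rw [hd0 j hj1]; simp
    have hbjL : (b j L : ℚ) = 0 := by
      by_cases hbb : b j L = 0
      · simp [hbb]
      · exact absurd (hb _ _ hbb) (by rw [hLval]; omega)
    rw [hdj, hdL, htL, hbjL] at hoff
    have h2 : (2 : ℚ) * (c L : ℚ) ≠ 0 := mul_ne_zero two_ne_zero hcLq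
    apply mul_left_cancel₀ h2
    linear_combination hoff
  -- final identity
  have part1 : ((c L : ℚ) / 2) • (2 * bxQ n b L)
      = ∑ i : Fin n, (if i = L then (c L : ℚ) else 0) • bxQ n b i := by
    simp only [ite_smul, zero_smul, Finset.sum_ite_eq', Finset.mem_univ, if_true]
    rw [show (2 : BRingQ n b) * bxQ n b L = (2 : ℚ) • bxQ n b L by rw [two_mul, two_smul],
      smul_smul]
    congr 1
    field_simp
  have part2 : ((c L : ℚ) / 2) • bbarQ n b k L
      = ∑ i : Fin n, (if k ≤ (i : ℕ) ∧ i < L then ((c L : ℚ) / 2) * (b L i : ℚ) else 0) • bxQ n b i := by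
    rw [bbarQ, Finset.smul_sum]
    simp only [smul_smul]
    rw [Finset.sum_filter]
    simp only [ite_smul, zero_smul]
  have hfin : ∑ i : Fin n, ((c i : ℚ)) • bxQ n b i
      = ((c L : ℚ) / 2) • (2 * bxQ n b L - bbarQ n b k L)
        + ∑ i : Fin n, (if (i : ℕ) < k then ((c i : ℚ)) else 0) • bxQ n b i := by
    rw [smul_sub, part1, part2, ← Finset.sum_sub_distrib, ← Finset.sum_add_distrib]
    refine Finset.sum_congr rfl fun i _ => ?_
    rw [← sub_smul, ← add_smul]
    congr 1
    by_cases h1 : (i : ℕ) < k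
    · have hiL : i ≠ L := fun h => by rw [h, hLval] at h1; omega
      rw [if_neg hiL, if_neg (fun hc : k ≤ (i : ℕ) ∧ i < L => by omega), if_pos h1]
      ring
    · by_cases h2 : (i : ℕ) < ℓ - 1
      · have hiL : i ≠ L := fun h => by rw [h, hLval] at h2; omega
        have hiltL : i < L := by
          rw [Fin.lt_def, hLval]; omega
        rw [if_neg hiL, if_pos ⟨by omega, hiltL⟩, if_neg h1]
        rw [hkey i (by omega) h2]
        ring
      · by_cases h3 : (i : ℕ) = ℓ - 1
        · have hiL : i = L := Fin.ext (h3.trans hLval.symm)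
          rw [hiL, if_pos rfl, if_neg (fun hc : k ≤ (L : ℕ) ∧ L < L => lt_irrefl _ hc.2),
            if_neg (show ¬ (L : ℕ) < k by rw [hLval]; omega)]
          ring
        · have hc0i : c i = 0 := hc0 i (by omega)
          have hiL : i ≠ L := fun h => h3 (by rw [h, hLval])
          have hnotlt : ¬ i < L := by rw [Fin.lt_def, hLval]; omega
          rw [if_neg hiL, if_neg (fun hc : k ≤ (i : ℕ) ∧ i < L => hnotlt hc.2),
            if_neg (show ¬ (i : ℕ) < k by omega)]
          simp [hc0i]
  refine ⟨hl1, hln, (c L : ℚ) / 2, div_ne_zero hcLq two_ne_zero,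
    ∑ i : Fin n, (if (i : ℕ) < k then ((c i : ℚ)) else 0) • bxQ n b i,
    mem_FQ (fun i hi => if_neg (by omega)), ?_⟩
  rw [htoQc, ← linear_sum_eq]
  exact hfin

end Bott
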